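/- Let X be a free ℤ-module of finite rank, let R ⊆ X ∖ {0} be a finite subset, and let c, c' : R → Hom_ℤ(X, ℤ) be two maps such that c(α)(α) = 2 = c'(α)(α) for every α ∈ R, and such that for every α ∈ R the reflections s_{α,c(α)} and s_{α,c'(α)} map R onto R. Assume that the subgroup of Aut_ℤ(X) generated by {s_{α,c(α)} : α ∈ R} equals the subgroup generated by {s_{α,c'(α)} : α ∈ R}, and that this common group W is finite. Then c = c', i.e. the coroot attached to each root is uniquely determined by the pair (X, R) together with the Weyl group W acting on X. (This is the content of the paper's lemma that a root datum is determined, up to isomorphism, by its character group X with the set of roots R and by its Weyl group with its action on X.) -/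

import Mathlib

/-- The coroot attached to each root is uniquely determined by the pair `(X, R)`
together with the (finite) Weyl group `W` acting on `X`. -/
theorem coroots_determined_by_roots_and_weyl_group
    {X : Type*} [AddCommGroup X] [Module ℤ X] [Module.Free ℤ X] [Module.Finite ℤ X]
    (R : Finset X) (hR0 : (0 : X) ∉ R)
    (c c' : X → Module.Dual ℤ X)
    (hc2 : ∀ α ∈ R, c α α = 2) (hc'2 : ∀ α ∈ R, c' α α = 2)
    (hcR : ∀ α (hα : α ∈ R),
      ⇑(Module.reflection (hc2 α hα)) '' (R : Set X) = (R : Set X))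
    (hc'R : ∀ α (hα : α ∈ R),
      ⇑(Module.reflection (hc'2 α hα)) '' (R : Set X) = (R : Set X))
    (W : Subgroup (X ≃ₗ[ℤ] X))
    (hW : W = Subgroup.closure
      {g : X ≃ₗ[ℤ] X | ∃ α, ∃ hα : α ∈ R, g = Module.reflection (hc2 α hα)})
    (hW' : W = Subgroup.closure
      {g : X ≃ₗ[ℤ] X | ∃ α, ∃ hα : α ∈ R, g = Module.reflection (hc'2 α hα)})
    (hWfin : Finite W) :
    ∀ α ∈ R, c α = c' α := by
  intro α hα
  have hα0 : α ≠ 0 := fun h => hR0 (h ▸ hα)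
  haveI : @IsScalarTower ℤ ℤ X
      (@SMulZeroClass.toSMul _ _ _ (@DistribSMul.toSMulZeroClass _ _ _ (@DistribMulAction.toDistribSMul _ _ _ _ (@Module.toDistribMulAction ℤ ℤ _ _ (@Semiring.toModule ℤ Int.instSemiring)))))
      (@SMulZeroClass.toSMul _ _ _ (@DistribSMul.toSMulZeroClass _ _ _ (@DistribMulAction.toDistribSMul _ _ _ _ (@Module.toDistribMulAction ℤ X _ _ ‹Module ℤ X›))))
      (@SMulZeroClass.toSMul _ _ _ (@DistribSMul.toSMulZeroClass _ _ _ (@DistribMulAction.toDistribSMul _ _ _ _ (@Module.toDistribMulAction ℤ X _ _ ‹Module ℤ X›)))) :=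
    @IsScalarTower.left ℤ X _ (‹Module ℤ X›).toDistribMulAction.toMulAction
  set f := c α with hf
  set g := c' α with hg
  have hf₁ : f α = 2 := hc2 α hα
  have hg₁ : g α = 2 := hc'2 α hα
  have hfW : Module.reflection hf₁ ∈ W := hW ▸ Subgroup.subset_closure ⟨α, hα, rfl⟩
  have hgW : Module.reflection hg₁ ∈ W := hW' ▸ Subgroup.subset_closure ⟨α, hα, rfl⟩
  let u := Module.reflection hg₁ * Module.reflection hf₁
  have huW : u ∈ W := mul_mem hgW hfW
  have hu : u = LinearMap.id (R := ℤ) (M := X) + (f - g).smulRight α := by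
    ext y
    simp only [u, Module.reflection_apply, hg₁, LinearEquiv.coe_toLinearMap_mul,
      LinearMap.id_coe, LinearEquiv.coe_coe, Module.End.mul_apply, LinearMap.add_apply, id_eq,
      LinearMap.coe_smulRight, LinearMap.sub_apply, map_sub, map_smul, smul_eq_mul]
    module
  replace hu : ∀ (n : ℕ),
      ↑(u ^ n) = LinearMap.id (R := ℤ) (M := X) + (n : ℤ) • (f - g).smulRight α := by
    intros n
    induction n with
    | zero => simp
    | succ n ih =>
      have : ((f - g).smulRight α).comp ((n : ℤ) • (f - g).smulRight α) = 0 := by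
        ext y
        simp only [LinearMap.coe_comp, Function.comp_apply, LinearMap.smul_apply,
          LinearMap.coe_smulRight, LinearMap.sub_apply, map_zsmul, LinearMap.map_smul, hf₁, hg₁,
          smul_eq_mul, LinearMap.zero_apply, sub_self, smul_zero, zero_smul, zero_zsmul, smul_zero]
        simp [LinearMap.smul_apply, hf₁, hg₁]
      rw [pow_succ', LinearEquiv.coe_toLinearMap_mul, ih, hu, add_mul, mul_add, mul_add]
      simp_rw [Module.End.mul_eq_comp, LinearMap.comp_id, LinearMap.id_comp, this, add_zero,
        add_assoc, Nat.cast_succ, add_smul, one_smul]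
  have hfin : IsOfFinOrder u := by
    have h := isOfFinOrder_of_finite (⟨u, huW⟩ : W)
    exact Submonoid.isOfFinOrder_coe.2 h
  obtain ⟨n, hn₀, hn₁⟩ := isOfFinOrder_iff_pow_eq_one.mp hfin
  replace hn₁ : (↑(u ^ n) : X →ₗ[ℤ] X) = LinearMap.id := LinearEquiv.toLinearMap_inj.mpr hn₁
  have h := hu n
  rw [hn₁] at h
  have h0 : (n : ℤ) • (f - g).smulRight α = 0 := add_eq_left.mp h.symm
  haveI := IsAddTorsionFree.of_isTorsionFree ℤ X
  ext y
  have h2 := LinearMap.congr_fun h0 y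
  simp [hα0, hn₀.ne'] at h2
  exact sub_eq_zero.mp h2
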